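/- Let K, K₂ > 0 and let g : 𝕋^d → ℝ^p be an injective C² map with ‖∇²g‖ ≤ K and ‖∇g(u)w‖ ≥ K₂^{−1}‖w‖ for all u, w, whose image M = g(𝕋^d) is a d-dimensional C² submanifold. Define R(g) = inf_{q ≠ p ∈ M} ‖q−p‖² / (2·dist(q−p, T_p M)). Suppose there exist δ ∈ (0, (2K₂K)^{−1}) and points u*, v* ∈ 𝕋^d with ‖u* − v*‖ ≥ δ and ‖g(u*) − g(v*)‖ < K₂^{−1}δ − Kδ². Then R(g) ≤ ‖g(u*) − g(v*)‖ / 2. -/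

import Mathlib

open Metric

/-- The periodic (torus) distance on `ℝ^d`, i.e. the distance on `ℝ^d/ℤ^d`. -/
noncomputable def torusDist {d : ℕ} (u v : EuclideanSpace ℝ (Fin d)) : ℝ :=
  ⨅ k : Fin d → ℤ,
    ‖u - v - (WithLp.equiv 2 (Fin d → ℝ)).symm (fun i => (k i : ℝ))‖

/-- The lattice vector in `ℝ^d` corresponding to `k : ℤ^d`. -/
noncomputable def lat (d : ℕ) (k : Fin d → ℤ) : EuclideanSpace ℝ (Fin d) :=
  (WithLp.equiv 2 (Fin d → ℝ)).symm (fun i => (k i : ℝ))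

lemma lat_add (d : ℕ) (m n : Fin d → ℤ) : lat d (m + n) = lat d m + lat d n := by
  unfold lat
  rw [WithLp.equiv_symm_apply, ← WithLp.toLp_add]
  congr 1
  funext i
  simp

lemma lat_sub (d : ℕ) (m n : Fin d → ℤ) : lat d (m - n) = lat d m - lat d n := by
  unfold lat
  rw [WithLp.equiv_symm_apply, ← WithLp.toLp_sub]
  congr 1
  funext i
  simp

/-- Any point of `ℝ^d` can be translated by a lattice vector into the ball of
radius `√d`. -/
lemma exists_lat_norm_le (d : ℕ) (u : EuclideanSpace ℝ (Fin d)) :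
    ∃ k : Fin d → ℤ, ‖u - lat d k‖ ≤ Real.sqrt d := by
  refine ⟨fun i => ⌊(WithLp.equiv 2 (Fin d → ℝ) u) i⌋, ?_⟩
  rw [EuclideanSpace.norm_eq]
  apply Real.sqrt_le_sqrt
  have hle : ∀ i : Fin d,
      ‖(u - lat d fun i => ⌊(WithLp.equiv 2 (Fin d → ℝ) u) i⌋) i‖ ^ 2 ≤ 1 := by
    intro i
    have happ : (u - lat d fun i => ⌊(WithLp.equiv 2 (Fin d → ℝ) u) i⌋) i
        = (WithLp.equiv 2 (Fin d → ℝ) u) i - (⌊(WithLp.equiv 2 (Fin d → ℝ) u) i⌋ : ℝ) := rfl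
    rw [happ, Real.norm_eq_abs]
    set t : ℝ := (WithLp.equiv 2 (Fin d → ℝ) u) i
    have h1 : (⌊t⌋ : ℝ) ≤ t := Int.floor_le t
    have h2 : t < ⌊t⌋ + 1 := Int.lt_floor_add_one t
    rw [abs_of_nonneg (by linarith)]
    nlinarith
  calc (∑ i, ‖(u - lat d fun i => ⌊(WithLp.equiv 2 (Fin d → ℝ) u) i⌋) i‖ ^ 2)
      ≤ ∑ _i : Fin d, (1 : ℝ) := Finset.sum_le_sum fun i _ => hle i
    _ = d := by simp

section Aux

variable {E G : Type*} [NormedAddCommGroup E] [NormedSpace ℝ E]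
  [NormedAddCommGroup G] [NormedSpace ℝ G]

lemma aux_fderiv_lip (g : E → G) (hg : ContDiff ℝ 2 g) {K : ℝ}
    (h2 : ∀ u, ‖iteratedFDeriv ℝ 2 g u‖ ≤ K) (u v : E) :
    ‖fderiv ℝ g u - fderiv ℝ g v‖ ≤ K * ‖u - v‖ := by
  have hd : ContDiff ℝ 1 (fderiv ℝ g) := hg.fderiv_right (by norm_num)
  have hbound : ∀ x : E, ‖fderiv ℝ (fderiv ℝ g) x‖ ≤ K := by
    intro x
    have e1 := norm_iteratedFDeriv_fderiv (𝕜 := ℝ) (f := fderiv ℝ g) (x := x) (n := 0)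
    have e2 := norm_iteratedFDeriv_fderiv (𝕜 := ℝ) (f := g) (x := x) (n := 1)
    rw [norm_iteratedFDeriv_zero] at e1
    rw [e1, e2]
    exact h2 x
  have h := Convex.norm_image_sub_le_of_norm_fderiv_le
    (f := fderiv ℝ g) (s := (Set.univ : Set E)) (C := K)
    (fun x _ => (hd.differentiable one_ne_zero).differentiableAt)
    (fun x _ => hbound x) convex_univ (Set.mem_univ v) (Set.mem_univ u)
  exact h

lemma aux_taylor (g : E → G) (hg : ContDiff ℝ 2 g) {K : ℝ} (hK : 0 ≤ K)
    (h2 : ∀ u, ‖iteratedFDeriv ℝ 2 g u‖ ≤ K) (a b : E) :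
    ‖g a - g b - fderiv ℝ g b (a - b)‖ ≤ K * ‖a - b‖ ^ 2 := by
  have hdiff : ∀ x : E, DifferentiableAt ℝ g x := fun x =>
    (hg.differentiable (by norm_num)).differentiableAt
  have h := Convex.norm_image_sub_le_of_norm_fderiv_le'
    (f := g) (s := closedBall b ‖a - b‖) (φ := fderiv ℝ g b) (C := K * ‖a - b‖)
    (fun x _ => hdiff x)
    (fun x hx => by
      calc ‖fderiv ℝ g x - fderiv ℝ g b‖ ≤ K * ‖x - b‖ := aux_fderiv_lip g hg h2 x b
        _ ≤ K * ‖a - b‖ := by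
            have hxb := mem_closedBall_iff_norm.mp hx
            exact mul_le_mul_of_nonneg_left hxb hK)
    (convex_closedBall _ _) (mem_closedBall_self (norm_nonneg _))
    (by rw [mem_closedBall_iff_norm])
  calc ‖g a - g b - fderiv ℝ g b (a - b)‖ ≤ K * ‖a - b‖ * ‖a - b‖ := h
    _ = K * ‖a - b‖ ^ 2 := by ring

lemma aux_lower (g : E → G) (hg : ContDiff ℝ 2 g) {K K₂ : ℝ} (hK : 0 ≤ K)
    (h2 : ∀ u, ‖iteratedFDeriv ℝ 2 g u‖ ≤ K)
    (h1 : ∀ u (w : E), K₂⁻¹ * ‖w‖ ≤ ‖fderiv ℝ g u w‖) (a b : E) :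
    K₂⁻¹ * ‖a - b‖ - K * ‖a - b‖ ^ 2 ≤ ‖g a - g b‖ := by
  have ht := aux_taylor g hg hK h2 a b
  have h0 := h1 b (a - b)
  have hn : ‖fderiv ℝ g b (a - b)‖ - ‖g a - g b‖ ≤ ‖g a - g b - fderiv ℝ g b (a - b)‖ := by
    calc ‖fderiv ℝ g b (a - b)‖ - ‖g a - g b‖
        ≤ ‖fderiv ℝ g b (a - b) - (g a - g b)‖ := norm_sub_norm_le _ _
      _ = ‖g a - g b - fderiv ℝ g b (a - b)‖ := by rw [norm_sub_rev]
  linarith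

end Aux

set_option maxHeartbeats 1000000 in
theorem reach_upper_bound_from_close_far_points (d p : ℕ) (K K₂ : ℝ)
    (hK : 0 < K) (hK₂ : 0 < K₂)
    (g : EuclideanSpace ℝ (Fin d) → EuclideanSpace ℝ (Fin p))
    (hper : ∀ (k : Fin d → ℤ) (x : EuclideanSpace ℝ (Fin d)),
      g (x + (WithLp.equiv 2 (Fin d → ℝ)).symm (fun i => (k i : ℝ))) = g x)
    (hinj : ∀ u v, g u = g v →
      ∃ k : Fin d → ℤ, u - v = (WithLp.equiv 2 (Fin d → ℝ)).symm (fun i => (k i : ℝ)))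
    (hg : ContDiff ℝ 2 g)
    (h2 : ∀ u, ‖iteratedFDeriv ℝ 2 g u‖ ≤ K)
    (h1 : ∀ u (w : EuclideanSpace ℝ (Fin d)), K₂⁻¹ * ‖w‖ ≤ ‖fderiv ℝ g u w‖)
    (δ : ℝ) (hδ0 : 0 < δ) (hδ1 : δ < (2 * K₂ * K)⁻¹)
    (us vs : EuclideanSpace ℝ (Fin d))
    (hfar : δ ≤ torusDist us vs)
    (hclose : ‖g us - g vs‖ < K₂⁻¹ * δ - K * δ ^ 2) :
    sInf {r : ℝ | ∃ u v, g u ≠ g v ∧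
        r = ‖g u - g v‖ ^ 2 /
          (2 * infDist (g u - g v)
            (LinearMap.range (fderiv ℝ g v : EuclideanSpace ℝ (Fin d) →ₗ[ℝ] EuclideanSpace ℝ (Fin p)) :
              Set (EuclideanSpace ℝ (Fin p))))}
      ≤ ‖g us - g vs‖ / 2 := by
  classical
  have hper' : ∀ (k : Fin d → ℤ) (x : EuclideanSpace ℝ (Fin d)),
      g (x + lat d k) = g x := hper
  have hinj' : ∀ u v, g u = g v → ∃ k : Fin d → ℤ, u - v = lat d k := hinj
  have hgL : ∀ (k : Fin d → ℤ) (x : EuclideanSpace ℝ (Fin d)),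
      g (x - lat d k) = g x := by
    intro k x
    have h := hper' k (x - lat d k)
    rw [sub_add_cancel] at h
    exact h.symm
  set ρ : ℝ := (2 * K₂ * K)⁻¹ with hρdef
  have hρpos : 0 < ρ := by positivity
  have hδρ : δ < ρ := hδ1
  have hK2inv : K₂⁻¹ = 2 * ρ * K := by
    rw [hρdef]
    field_simp
  -- far hypothesis componentwise
  have hfar' : ∀ k : Fin d → ℤ, δ ≤ ‖us - vs - lat d k‖ := by
    intro k
    have hb : BddBelow (Set.range fun k : Fin d → ℤ => ‖us - vs - lat d k‖) :=
      ⟨0, by rintro r ⟨k', rfl⟩; exact norm_nonneg _⟩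
    have ht : torusDist us vs = ⨅ k : Fin d → ℤ, ‖us - vs - lat d k‖ := rfl
    rw [ht] at hfar
    exact le_trans hfar (ciInf_le hb k)
  set R : ℝ := Real.sqrt d with hRdef
  -- the compact constraint set
  set C : Set (EuclideanSpace ℝ (Fin d) × EuclideanSpace ℝ (Fin d)) :=
      (closedBall 0 R ×ˢ closedBall 0 R) ∩
      ⋂ k : Fin d → ℤ, {z | δ ≤ ‖z.1 - z.2 - lat d k‖} with hCdef
  have hCc : IsCompact C := by
    apply ((isCompact_closedBall _ _).prod (isCompact_closedBall _ _)).inter_right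
    exact isClosed_iInter fun k => isClosed_le continuous_const
      (((continuous_fst.sub continuous_snd).sub continuous_const).norm)
  -- translation into the constraint set
  have htrans : ∀ a b : EuclideanSpace ℝ (Fin d),
      (∀ k : Fin d → ℤ, δ ≤ ‖a - b - lat d k‖) →
      ∃ a' b', (a', b') ∈ C ∧ g a' = g a ∧ g b' = g b := by
    intro a b hab
    obtain ⟨ka, hka⟩ := exists_lat_norm_le d a
    obtain ⟨kb, hkb⟩ := exists_lat_norm_le d b
    refine ⟨a - lat d ka, b - lat d kb, ⟨⟨?_, ?_⟩, ?_⟩, hgL ka a, hgL kb b⟩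
    · simpa [mem_closedBall_iff_norm] using hka
    · simpa [mem_closedBall_iff_norm] using hkb
    · rw [Set.mem_iInter]
      intro k
      have hrw : a - lat d ka - (b - lat d kb) - lat d k
          = a - b - lat d (ka - kb + k) := by
        rw [lat_add, lat_sub]; abel
      show δ ≤ ‖a - lat d ka - (b - lat d kb) - lat d k‖
      rw [hrw]
      exact hab (ka - kb + k)
  have hCne : C.Nonempty := by
    obtain ⟨a', b', hmem, _, _⟩ := htrans us vs hfar'
    exact ⟨(a', b'), hmem⟩
  -- minimize
  have hfc : Continuous fun z : EuclideanSpace ℝ (Fin d) × EuclideanSpace ℝ (Fin d) =>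
      ‖g z.1 - g z.2‖ :=
    Continuous.norm ((hg.continuous.comp continuous_fst).sub (hg.continuous.comp continuous_snd))
  obtain ⟨⟨x, y⟩, hxyC, hmin⟩ := hCc.exists_isMinOn hCne hfc.continuousOn
  have hcon : ∀ k : Fin d → ℤ, δ ≤ ‖x - y - lat d k‖ := by
    have h := hxyC.2
    rw [Set.mem_iInter] at h
    exact fun k => h k
  have hne : g x ≠ g y := by
    intro h
    obtain ⟨k, hk⟩ := hinj' x y h
    have h2' := hcon k
    rw [show x - y - lat d k = 0 by rw [← hk]; abel] at h2'
    simp at h2'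
    linarith
  have hm_pos : 0 < ‖g x - g y‖ := norm_pos_iff.mpr (sub_ne_zero.mpr hne)
  have hm_le : ‖g x - g y‖ ≤ ‖g us - g vs‖ := by
    obtain ⟨a', b', hmem, ha', hb'⟩ := htrans us vs hfar'
    have h := hmin hmem
    simpa [ha', hb'] using h
  -- the minimizer is strictly inside the constraint region
  have hρbound : ∀ k : Fin d → ℤ, ρ ≤ ‖x - y - lat d k‖ := by
    intro k
    by_contra hcontra
    push_neg at hcontra
    have hrδ : δ ≤ ‖x - y - lat d k‖ := hcon k
    have hgx : g (x - lat d k) = g x := hgL k x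
    have hlow := aux_lower g hg (le_of_lt hK) h2 h1 (x - lat d k) y
    rw [show x - lat d k - y = x - y - lat d k by abel, hgx] at hlow
    set r : ℝ := ‖x - y - lat d k‖ with hrdef
    have hmono : K₂⁻¹ * δ - K * δ ^ 2 ≤ K₂⁻¹ * r - K * r ^ 2 := by
      rw [hK2inv]
      nlinarith [mul_nonneg (mul_nonneg hK.le (sub_nonneg.mpr hrδ))
        (show (0:ℝ) ≤ 2 * ρ - r - δ by linarith)]
    have hlt : ‖g x - g y‖ < K₂⁻¹ * δ - K * δ ^ 2 := lt_of_le_of_lt hm_le hclose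
    linarith
  -- local minimality in the second variable
  set ε : ℝ := (ρ - δ) / 3 with hεdef
  have hε : 0 < ε := by rw [hεdef]; linarith
  have hglobal : ∀ a b : EuclideanSpace ℝ (Fin d),
      (∀ k : Fin d → ℤ, δ ≤ ‖a - b - lat d k‖) → ‖g x - g y‖ ≤ ‖g a - g b‖ := by
    intro a b hab
    obtain ⟨a', b', hmem, ha', hb'⟩ := htrans a b hab
    have h := hmin hmem
    simpa [ha', hb'] using h
  have hlocal : IsLocalMin (fun b : EuclideanSpace ℝ (Fin d) => ‖g x - g b‖ ^ 2) y := by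
    filter_upwards [Metric.ball_mem_nhds y hε] with b hb
    have hcon' : ∀ k : Fin d → ℤ, δ ≤ ‖x - b - lat d k‖ := by
      intro k
      have h1' : ‖x - y - lat d k‖ ≤ ‖x - b - lat d k‖ + ‖b - y‖ := by
        calc ‖x - y - lat d k‖ = ‖(x - b - lat d k) + (b - y)‖ := by congr 1; abel
          _ ≤ ‖x - b - lat d k‖ + ‖b - y‖ := norm_add_le _ _
      have h2' : ‖b - y‖ < ε := by rw [← dist_eq_norm]; exact mem_ball.mp hb
      have h3' := hρbound k
      rw [hεdef] at h2'
      linarith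
    have hmb : ‖g x - g y‖ ≤ ‖g x - g b‖ := hglobal x b hcon'
    exact pow_le_pow_left₀ (norm_nonneg _) hmb 2
  -- first-order condition : orthogonality
  have hψ : HasFDerivAt (fun b : EuclideanSpace ℝ (Fin d) => g x - g b)
      (-(fderiv ℝ g y)) y :=
    HasFDerivAt.const_sub ((hg.differentiable (by norm_num)).differentiableAt.hasFDerivAt) (g x)
  have hInner := hψ.inner ℝ hψ
  have hfun : (fun b : EuclideanSpace ℝ (Fin d) =>
      (inner ℝ (g x - g b) (g x - g b) : ℝ))
      = fun b : EuclideanSpace ℝ (Fin d) => ‖g x - g b‖ ^ 2 := by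
    funext b; exact real_inner_self_eq_norm_sq _
  rw [hfun] at hInner
  have hder0 := hlocal.hasFDerivAt_eq_zero hInner
  have horth : ∀ w : EuclideanSpace ℝ (Fin d),
      (inner ℝ (g x - g y) (fderiv ℝ g y w) : ℝ) = 0 := by
    intro w
    have h0 := DFunLike.congr_fun hder0 w
    simp only [ContinuousLinearMap.comp_apply, ContinuousLinearMap.prod_apply,
      ContinuousLinearMap.neg_apply, fderivInnerCLM_apply, inner_neg_right,
      inner_neg_left, ContinuousLinearMap.zero_apply] at h0
    have hsymm := real_inner_comm (fderiv ℝ g y w) (g x - g y)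
    linarith [h0, hsymm]
  -- infDist equals the norm
  have hW0 : (0 : EuclideanSpace ℝ (Fin p)) ∈
      (LinearMap.range (fderiv ℝ g y : EuclideanSpace ℝ (Fin d) →ₗ[ℝ] EuclideanSpace ℝ (Fin p)) : Set (EuclideanSpace ℝ (Fin p))) := by
    exact Submodule.zero_mem _
  have h_inf_le : infDist (g x - g y)
      (LinearMap.range (fderiv ℝ g y : EuclideanSpace ℝ (Fin d) →ₗ[ℝ] EuclideanSpace ℝ (Fin p)) : Set (EuclideanSpace ℝ (Fin p))) ≤ ‖g x - g y‖ := by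
    have h := infDist_le_dist_of_mem (x := g x - g y) hW0
    simpa using h
  have h_inf_ge : ‖g x - g y‖ ≤ infDist (g x - g y)
      (LinearMap.range (fderiv ℝ g y : EuclideanSpace ℝ (Fin d) →ₗ[ℝ] EuclideanSpace ℝ (Fin p)) : Set (EuclideanSpace ℝ (Fin p))) := by
    have hnW : Nonempty (LinearMap.range (fderiv ℝ g y : EuclideanSpace ℝ (Fin d) →ₗ[ℝ] EuclideanSpace ℝ (Fin p)) : Set (EuclideanSpace ℝ (Fin p))) :=
      ⟨⟨0, hW0⟩⟩
    rw [infDist_eq_iInf]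
    apply le_ciInf
    rintro ⟨z, hz⟩
    obtain ⟨w, rfl⟩ := LinearMap.mem_range.mp hz
    have hperp := horth w
    have hexp : ‖g x - g y - fderiv ℝ g y w‖ ^ 2
        = ‖g x - g y‖ ^ 2 - 2 * (inner ℝ (g x - g y) (fderiv ℝ g y w) : ℝ)
          + ‖fderiv ℝ g y w‖ ^ 2 := norm_sub_sq_real _ _
    have hsq : ‖g x - g y‖ ^ 2 ≤ ‖g x - g y - fderiv ℝ g y w‖ ^ 2 := by
      rw [hexp, hperp]
      nlinarith [sq_nonneg ‖(fderiv ℝ g y) w‖]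
    have hd : dist (g x - g y) (fderiv ℝ g y w) = ‖g x - g y - fderiv ℝ g y w‖ :=
      dist_eq_norm _ _
    change ‖g x - g y‖ ≤ dist (g x - g y) (fderiv ℝ g y w)
    rw [hd]
    nlinarith [norm_nonneg (g x - g y - fderiv ℝ g y w), norm_nonneg (g x - g y)]
  have h_inf : infDist (g x - g y)
      (LinearMap.range (fderiv ℝ g y : EuclideanSpace ℝ (Fin d) →ₗ[ℝ] EuclideanSpace ℝ (Fin p)) : Set (EuclideanSpace ℝ (Fin p)))
      = ‖g x - g y‖ := le_antisymm h_inf_le h_inf_ge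
  -- conclude
  have hmem : (‖g x - g y‖ / 2) ∈ {r : ℝ | ∃ u v, g u ≠ g v ∧
      r = ‖g u - g v‖ ^ 2 /
        (2 * infDist (g u - g v)
          (LinearMap.range (fderiv ℝ g v : EuclideanSpace ℝ (Fin d) →ₗ[ℝ] EuclideanSpace ℝ (Fin p)) : Set (EuclideanSpace ℝ (Fin p))))} := by
    refine ⟨x, y, hne, ?_⟩
    rw [h_inf]
    have hm0 : ‖g x - g y‖ ≠ 0 := ne_of_gt hm_pos
    field_simp
  have hbdd : BddBelow {r : ℝ | ∃ u v, g u ≠ g v ∧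
      r = ‖g u - g v‖ ^ 2 /
        (2 * infDist (g u - g v)
          (LinearMap.range (fderiv ℝ g v : EuclideanSpace ℝ (Fin d) →ₗ[ℝ] EuclideanSpace ℝ (Fin p)) : Set (EuclideanSpace ℝ (Fin p))))} := by
    refine ⟨0, ?_⟩
    rintro r ⟨u, v, huv, rfl⟩
    apply div_nonneg (by positivity)
    exact mul_nonneg (by norm_num) infDist_nonneg
  refine csInf_le_of_le hbdd hmem ?_
  linarith
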